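/- Let k be an infinite field and let P be the five-element poset {v, w, x, y, z} with w ≤ v, x ≤ v, y ≤ v, z ≤ v as its only nontrivial relations. Then the functors P_{a,1} : P → Vect_k for a ∈ k are pairwise non-isomorphic for distinct values of a; consequently there are infinitely many pairwise non-isomorphic functors from P to k-vector spaces whose value at v is 2-dimensional and whose values at w, x, y, z are 1-dimensional. -/

import Mathlib

open CategoryTheory

/-- The five-element poset `{v, w, x, y, z}` whose only nontrivial order
relations are `w ≤ v`, `x ≤ v`, `y ≤ v`, `z ≤ v`. -/
inductive Pfive : Type
  | v | w | x | y | z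
  deriving DecidableEq

namespace Pfive

instance : PartialOrder Pfive where
  le p q := p = q ∨ q = Pfive.v
  le_refl p := Or.inl rfl
  le_trans p q r h1 h2 := by
    rcases h1 with h1 | h1
    · subst h1; exact h2
    · rcases h2 with h2 | h2
      · subst h2; exact Or.inr h1
      · exact Or.inr h2
  le_antisymm p q h1 h2 := by
    rcases h1 with h1 | h1
    · exact h1
    · rcases h2 with h2 | h2
      · exact h2.symm
      · rw [h1, h2]

lemma le_iff (p q : Pfive) : p ≤ q ↔ (p = q ∨ q = Pfive.v) := Iff.rfl

end Pfive

variable (k : Type) [Field k]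

/-- The value of the poset module `P_{a,1}` at a point of `Pfive`:
`k²` at `v`, and `k` at `w`, `x`, `y`, `z`. -/
def Pobj : Pfive → ModuleCat.{0} k
  | .v => ModuleCat.of k (k × k)
  | _ => ModuleCat.of k k

lemma Pobj_of_ne_v (p : Pfive) (hp : p ≠ Pfive.v) : Pobj k p = ModuleCat.of k k := by
  cases p
  · exact absurd rfl hp
  all_goals rfl

/-- The column vector labelling the structure map `p → v` of `P_{a,1}`:
`(1,0)ᵗ` at `w`, `(0,1)ᵗ` at `x`, `(1,1)ᵗ` at `y` and `(a,1)ᵗ` at `z`. -/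
def Pvec (a : k) : Pfive → k × k
  | .w => (1, 0)
  | .x => (0, 1)
  | .y => (1, 1)
  | .z => (a, 1)
  | .v => (0, 0)

/-- The structure maps of the poset module `P_{a,1}`. -/
noncomputable def Pmap (a : k) : ∀ p q : Pfive, p ≤ q → (Pobj k p ⟶ Pobj k q) :=
  fun p q h =>
    if hpq : p = q then eqToHom (congrArg (Pobj k) hpq)
    else
      have hq : q = Pfive.v := ((Pfive.le_iff p q).mp h).resolve_left hpq
      have hp : p ≠ Pfive.v := fun hpv => hpq (hpv.trans hq.symm)
      eqToHom (Pobj_of_ne_v k p hp) ≫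
        ModuleCat.ofHom (LinearMap.toSpanSingleton k (k × k) (Pvec k a p)) ≫
        eqToHom (congrArg (Pobj k) hq).symm

lemma Pmap_self (a : k) (p : Pfive) (h : p ≤ p) : Pmap k a p p h = 𝟙 (Pobj k p) := by
  simp [Pmap]

/-- The poset module `P_{a,1} : Pfive ⥤ Vect_k` of the paper: it assigns `k²`
to `v`, `k` to `w, x, y, z`, and the maps `w → v`, `x → v`, `y → v`, `z → v`
are multiplication by the column vectors `(1,0)ᵗ`, `(0,1)ᵗ`, `(1,1)ᵗ`, `(a,1)ᵗ`. -/
noncomputable def Pfunc (a : k) : Pfive ⥤ ModuleCat.{0} k where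
  obj := Pobj k
  map {p q} f := Pmap k a p q (leOfHom f)
  map_id p := Pmap_self k a p le_rfl
  map_comp {p q r} f g := by
    by_cases hpq : p = q
    · subst hpq
      rw [Subsingleton.elim f (𝟙 p), Category.id_comp]
      try dsimp only
      rw [Pmap_self, Category.id_comp]
    · have hq : q = Pfive.v := (((Pfive.le_iff p q).mp (leOfHom f))).resolve_left hpq
      subst hq
      have hr : r = Pfive.v := by
        rcases (Pfive.le_iff _ r).mp (leOfHom g) with h | h
        · exact h.symm
        · exact h
      subst hr
      rw [Subsingleton.elim g (𝟙 Pfive.v), Category.comp_id]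
      try dsimp only
      rw [Pmap_self, Category.comp_id]


section Key
variable {k : Type} [Field k]

/-- The scalar by which a natural transformation acts at a point `p ≠ v`. -/
noncomputable def Pc {a a' : k} (e : Pfunc k a ⟶ Pfunc k a') (p : Pfive) (hp : p ≠ Pfive.v) : k :=
  ((eqToHom (Pobj_of_ne_v k p hp).symm ≫ e.app p ≫ eqToHom (Pobj_of_ne_v k p hp) :
      ModuleCat.of k k ⟶ ModuleCat.of k k).hom : k →ₗ[k] k) (1:k)

lemma Pvec_natural {a a' : k} (e : Pfunc k a ≅ Pfunc k a') (p : Pfive) (hp : p ≠ Pfive.v) :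
    ((e.hom.app Pfive.v : (Pfunc k a).obj Pfive.v ⟶ (Pfunc k a').obj Pfive.v).hom :
        (k × k) →ₗ[k] (k × k)) (Pvec k a p)
      = (Pc e.hom p hp • Pvec k a' p : k × k) := by
  have hf : ∀ b : k, (Pfunc k b).map (homOfLE (Or.inr rfl : p ≤ Pfive.v)) =
      eqToHom (Pobj_of_ne_v k p hp) ≫
        ModuleCat.ofHom (LinearMap.toSpanSingleton k (k × k) (Pvec k b p)) := by
    intro b
    show Pmap k b p Pfive.v (Or.inr rfl) = _
    rw [Pmap, dif_neg hp]
    rfl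
  have h := e.hom.naturality (homOfLE (Or.inr rfl : p ≤ Pfive.v))
  rw [hf a, hf a'] at h
  have h2 := congrArg (fun f => eqToHom (Pobj_of_ne_v k p hp).symm ≫ f) h
  erw [Category.assoc, eqToHom_trans_assoc, eqToHom_refl, Category.id_comp] at h2
  have h2' : ((e.hom.app Pfive.v : (Pfunc k a).obj Pfive.v ⟶ (Pfunc k a').obj Pfive.v).hom :
        (k × k) →ₗ[k] (k × k)).comp (LinearMap.toSpanSingleton k (k × k) (Pvec k a p))
      = (LinearMap.toSpanSingleton k (k × k) (Pvec k a' p)).comp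
          ((eqToHom (Pobj_of_ne_v k p hp).symm ≫ e.hom.app p ≫ eqToHom (Pobj_of_ne_v k p hp) :
            ModuleCat.of k k ⟶ ModuleCat.of k k).hom : k →ₗ[k] k) := congrArg ModuleCat.Hom.hom h2
  have h3 := LinearMap.congr_fun h2' (1 : k)
  have h4 : ((e.hom.app Pfive.v : (Pfunc k a).obj Pfive.v ⟶ (Pfunc k a').obj Pfive.v).hom :
      (k × k) →ₗ[k] (k × k)) ((1:k) • Pvec k a p) = (Pc e.hom p hp • Pvec k a' p : k × k) := h3
  rwa [one_smul] at h4

lemma Pfunc_iso_eq {a a' : k} (e : Pfunc k a ≅ Pfunc k a') : a = a' := by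
  have hw : (Pfive.w : Pfive) ≠ Pfive.v := fun h => Pfive.noConfusion h
  have hx : (Pfive.x : Pfive) ≠ Pfive.v := fun h => Pfive.noConfusion h
  have hy : (Pfive.y : Pfive) ≠ Pfive.v := fun h => Pfive.noConfusion h
  have hz : (Pfive.z : Pfive) ≠ Pfive.v := fun h => Pfive.noConfusion h
  set T : (k × k) →ₗ[k] (k × k) :=
    ((e.hom.app Pfive.v : (Pfunc k a).obj Pfive.v ⟶ (Pfunc k a').obj Pfive.v).hom :
      (k × k) →ₗ[k] (k × k)) with hT
  set cw := Pc e.hom Pfive.w hw with hcwdef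
  set cx := Pc e.hom Pfive.x hx with hcxdef
  set cy := Pc e.hom Pfive.y hy with hcydef
  set cz := Pc e.hom Pfive.z hz with hczdef
  have h1 : T ((1, 0) : k × k) = cw • ((1, 0) : k × k) := Pvec_natural e Pfive.w hw
  have h2 : T ((0, 1) : k × k) = cx • ((0, 1) : k × k) := Pvec_natural e Pfive.x hx
  have h3 : T ((1, 1) : k × k) = cy • ((1, 1) : k × k) := Pvec_natural e Pfive.y hy
  have h4 : T ((a, 1) : k × k) = cz • ((a', 1) : k × k) := Pvec_natural e Pfive.z hz
  simp only [Prod.smul_mk, smul_eq_mul, mul_one, mul_zero] at h1 h2 h3 h4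
  have hadd : ((1, 1) : k × k) = (1, 0) + (0, 1) := by
    rw [Prod.mk_add_mk, add_zero, zero_add]
  have h5 : ((cy, cy) : k × k) = ((cw, 0) + (0, cx) : k × k) := by
    rw [← h1, ← h2, ← map_add, ← hadd, h3]
  rw [Prod.mk_add_mk, add_zero, zero_add, Prod.mk.injEq] at h5
  have hadd2 : ((a, 1) : k × k) = a • ((1, 0) : k × k) + (0, 1) := by
    rw [Prod.smul_mk, smul_eq_mul, smul_eq_mul, mul_one, mul_zero, Prod.mk_add_mk,
      add_zero, zero_add]
  have h6 : ((cz * a', cz) : k × k) = (a • ((cw, 0) : k × k) + (0, cx) : k × k) := by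
    rw [← h1, ← h2, ← map_smul, ← map_add, ← hadd2, h4]
  rw [Prod.smul_mk, smul_eq_mul, smul_eq_mul, mul_zero, Prod.mk_add_mk, add_zero, zero_add,
    Prod.mk.injEq] at h6
  set S : (k × k) →ₗ[k] (k × k) :=
    ((e.inv.app Pfive.v : (Pfunc k a').obj Pfive.v ⟶ (Pfunc k a).obj Pfive.v).hom :
      (k × k) →ₗ[k] (k × k)) with hS
  have hST : S.comp T = LinearMap.id := by
    have := e.hom_inv_id_app Pfive.v
    exact congrArg ModuleCat.Hom.hom this
  have hne : cw ≠ 0 := by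
    intro h0
    have h7 : T ((1, 0) : k × k) = 0 := by rw [h1, h0]; rfl
    have h8 := LinearMap.congr_fun hST ((1, 0) : k × k)
    rw [LinearMap.comp_apply, h7, map_zero, LinearMap.id_apply] at h8
    exact zero_ne_one (congrArg Prod.fst h8)
  have : cw * a = cw * a' := by
    rw [mul_comm cw a, ← h6.1, h6.2, ← h5.2, h5.1]
  exact mul_left_cancel₀ hne this

end Key

/-- For an infinite field `k`, the poset modules `P_{a,1}` on the five-element
poset `Pfive` are pairwise non-isomorphic for distinct `a ∈ k`; consequently
there are infinitely many pairwise non-isomorphic functors `Pfive ⥤ Vect_k`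
whose value at `v` is 2-dimensional and whose values at `w, x, y, z` are
1-dimensional. -/
theorem infinitely_many_nonisomorphic_poset_modules
    (k : Type) [Field k] [Infinite k] :
    (∀ a a' : k, a ≠ a' → IsEmpty (Pfunc k a ≅ Pfunc k a')) ∧
    ∃ S : Set (Pfive ⥤ ModuleCat.{0} k), S.Infinite ∧
      (∀ F ∈ S, Module.finrank k (F.obj Pfive.v) = 2 ∧
        ∀ p : Pfive, p ≠ Pfive.v → Module.finrank k (F.obj p) = 1) ∧
      (∀ F ∈ S, ∀ G ∈ S, F ≠ G → IsEmpty (F ≅ G)) := by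
  have key : ∀ a a' : k, a ≠ a' → IsEmpty (Pfunc k a ≅ Pfunc k a') :=
    fun a a' h => ⟨fun e => h (Pfunc_iso_eq e)⟩
  refine ⟨key, Set.range (Pfunc k), ?_, ?_, ?_⟩
  · apply Set.infinite_range_of_injective
    intro a a' h
    by_contra hne
    exact (key a a' hne).false (eqToIso h)
  · rintro F ⟨a, rfl⟩
    constructor
    · show Module.finrank k (k × k) = 2
      rw [Module.finrank_prod, Module.finrank_self]
    · intro p hp
      cases p with
      | v => exact absurd rfl hp
      | w => exact Module.finrank_self k
      | x => exact Module.finrank_self k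
      | y => exact Module.finrank_self k
      | z => exact Module.finrank_self k
  · rintro F ⟨a, rfl⟩ G ⟨a', rfl⟩ hne
    exact key a a' fun h => hne (congrArg _ h)
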